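/- The pair (E, p) is logically contextual if and only if (E, p) witnesses a logical Hardy-type paradox. -/
import Mathlib


/-- The probability that a distribution `q` on the finite set `Λ` of deterministic states
assigns to a subset `S ⊆ Λ`: `q(S) = ∑_{l ∈ S} q l`. -/
noncomputable def setSum {Λ : Type*} [Fintype Λ] (q : Λ → ℝ) (S : Set Λ) : ℝ :=
  ∑ l, S.indicator q l

/-- `(E, p)` is logically contextual if there is no probability distribution `q` on `Λ`
such that for every `e ∈ E`, `q(e) > 0` iff `p e > 0`. -/
def IsLogicallyContextual {Λ : Type*} [Fintype Λ] (E : Set (Set Λ)) (p : Set Λ → ℝ) : Prop :=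
  ¬ ∃ q : Λ → ℝ, (∀ l, 0 ≤ q l) ∧ (∑ l, q l) = 1 ∧
      ∀ e ∈ E, (0 < setSum q e ↔ 0 < p e)

/-- `(E, p)` witnesses a logical Hardy-type paradox if there exist finitely many sets
`e₁, …, eₙ ∈ E` (`n ≥ 1`) with `e₁ ∩ ⋯ ∩ eₙ = ∅` and an index `k` such that
`p eₖ > 0` and `p eᵢ = 1` for all `i ≠ k`. -/
def WitnessesLogicalHardy {Λ : Type*} (E : Set (Set Λ)) (p : Set Λ → ℝ) : Prop :=
  ∃ n : ℕ, 1 ≤ n ∧ ∃ e : Fin n → Set Λ,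
    (∀ i, e i ∈ E) ∧ (⋂ i, e i) = ∅ ∧
    ∃ k : Fin n, 0 < p (e k) ∧ ∀ i ≠ k, p (e i) = 1

/-- `(E, p)` is strongly contextual if for every deterministic state `l ∈ Λ` there exists
`e ∈ E` with `l ∈ e` and `p e = 0`. -/
def IsStronglyContextual {Λ : Type*} (E : Set (Set Λ)) (p : Set Λ → ℝ) : Prop :=
  ∀ l : Λ, ∃ e ∈ E, l ∈ e ∧ p e = 0


lemma setSum_pos_iff {Λ : Type*} [Fintype Λ] (q : Λ → ℝ) (hq : ∀ l, 0 ≤ q l) (S : Set Λ) :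
    0 < setSum q S ↔ ∃ l ∈ S, 0 < q l := by
  classical
  constructor
  · intro h
    by_contra hc
    push_neg at hc
    have hz : setSum q S = 0 := by
      apply Finset.sum_eq_zero
      intro l _
      by_cases hl : l ∈ S
      · rw [Set.indicator_of_mem hl]
        exact le_antisymm (hc l hl) (hq l)
      · exact Set.indicator_of_notMem hl q
    rw [hz] at h; exact lt_irrefl 0 h
  · rintro ⟨l, hl, hql⟩
    apply Finset.sum_pos'
    · intro i _; exact Set.indicator_nonneg (fun j _ => hq j) i
    · exact ⟨l, Finset.mem_univ l, by rwa [Set.indicator_of_mem hl]⟩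

lemma hardy_of_allbad {Λ : Type*} [Fintype Λ] (E : Set (Set Λ)) (p : Set Λ → ℝ)
    (hcompl : ∀ e ∈ E, eᶜ ∈ E) (hpc : ∀ e ∈ E, p eᶜ = 1 - p e)
    (e : Set Λ) (he : e ∈ E) (hpe : 0 < p e)
    (hbad : ∀ l ∈ e, ∃ f ∈ E, l ∈ f ∧ p f = 0) : WitnessesLogicalHardy E p := by
  classical
  rcases Set.eq_empty_or_nonempty e with hemp | ⟨l', hl'⟩
  · refine ⟨1, le_refl 1, fun _ => e, fun _ => he, by simp [hemp, Set.iInter_const], 0, hpe, ?_⟩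
    intro i hi
    exact absurd (Subsingleton.elim i 0) hi
  · have hbad' : ∀ l : Λ, ∃ f, f ∈ E ∧ p f = 0 ∧ (l ∈ e → l ∈ f) := by
      intro l
      by_cases h : l ∈ e
      · obtain ⟨f, hf, hlf, hpf⟩ := hbad l h
        exact ⟨f, hf, hpf, fun _ => hlf⟩
      · obtain ⟨f, hf, _, hpf⟩ := hbad l' hl'
        exact ⟨f, hf, hpf, fun h' => absurd h' h⟩
    choose F hFE hF0 hFin using hbad'
    set ε := (Fintype.equivFin Λ).symm with hε
    refine ⟨Fintype.card Λ + 1, by omega,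
      Fin.cons e (fun i => (F (ε i))ᶜ), ?_, ?_, 0, hpe, ?_⟩
    · intro i
      refine Fin.cases ?_ ?_ i
      · simpa using he
      · intro j; simpa using hcompl _ (hFE (ε j))
    · ext l
      simp only [Set.mem_iInter, Set.mem_empty_iff_false, iff_false]
      intro h
      have h0 : l ∈ e := by simpa using h 0
      have h1 := h ((ε.symm l).succ)
      simp only [Fin.cons_succ, Equiv.apply_symm_apply] at h1
      exact h1 (hFin l h0)
    · intro i hi
      obtain ⟨j, rfl⟩ : ∃ j : Fin (Fintype.card Λ), j.succ = i := by
        rcases Fin.eq_zero_or_eq_succ i with h | ⟨j, hj⟩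
        · exact absurd h hi
        · exact ⟨j, hj.symm⟩
      rw [Fin.cons_succ, hpc _ (hFE (ε j)), hF0]
      norm_num

/-- A general system `(E, p)` is logically contextual iff it witnesses a logical
Hardy-type paradox. -/
theorem logicallyContextual_iff_witnessesLogicalHardy {Λ : Type*} [Fintype Λ] [Nonempty Λ]
    (E : Set (Set Λ)) (hE : E.Nonempty) (hcompl : ∀ e ∈ E, eᶜ ∈ E)
    (p : Set Λ → ℝ) (hp0 : ∀ e ∈ E, 0 ≤ p e) (hp1 : ∀ e ∈ E, p e ≤ 1)
    (hpc : ∀ e ∈ E, p eᶜ = 1 - p e) :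
    IsLogicallyContextual E p ↔ WitnessesLogicalHardy E p := by
  classical
  constructor
  · intro hctx
    by_contra hH
    apply hctx
    -- every event of positive probability contains a "good" state
    have key : ∀ e ∈ E, 0 < p e → ∃ l ∈ e, ∀ f ∈ E, l ∈ f → 0 < p f := by
      intro e he hpe
      by_contra h
      push_neg at h
      apply hH
      apply hardy_of_allbad E p hcompl hpc e he hpe
      intro l hl
      obtain ⟨f, hf, hlf, hpf⟩ := h l hl
      exact ⟨f, hf, hlf, le_antisymm hpf (hp0 f hf)⟩
    set G : Finset Λ := Finset.univ.filter (fun l => ∀ f ∈ E, l ∈ f → 0 < p f) with hG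
    have hGne : G.Nonempty := by
      obtain ⟨e0, he0⟩ := hE
      rcases lt_or_eq_of_le (hp0 e0 he0) with hpos | hzero
      · obtain ⟨l, _, hlg⟩ := key e0 he0 hpos
        refine ⟨l, ?_⟩
        rw [hG, Finset.mem_filter]
        exact ⟨Finset.mem_univ l, hlg⟩
      · have hc : p e0ᶜ = 1 := by rw [hpc e0 he0, ← hzero]; ring
        obtain ⟨l, _, hlg⟩ := key e0ᶜ (hcompl e0 he0) (by rw [hc]; norm_num)
        refine ⟨l, ?_⟩
        rw [hG, Finset.mem_filter]
        exact ⟨Finset.mem_univ l, hlg⟩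
    have hcard : (0 : ℝ) < G.card := by exact_mod_cast Finset.card_pos.mpr hGne
    set q : Λ → ℝ := fun l => if l ∈ G then (G.card : ℝ)⁻¹ else 0 with hq
    have hqnn : ∀ l, 0 ≤ q l := by
      intro l; rw [hq]; dsimp only; split
      · positivity
      · exact le_refl 0
    refine ⟨q, hqnn, ?_, ?_⟩
    · rw [hq]
      simp only
      rw [Finset.sum_ite_mem, Finset.univ_inter, Finset.sum_const, nsmul_eq_mul,
        mul_inv_cancel₀ (ne_of_gt hcard)]
    · intro e he
      rw [setSum_pos_iff _ hqnn]
      constructor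
      · rintro ⟨l, hl, hql⟩
        by_contra hpe
        have hpe0 : p e = 0 := le_antisymm (not_lt.mp hpe) (hp0 e he)
        have : l ∉ G := by
          intro hlG
          rw [hG, Finset.mem_filter] at hlG
          exact absurd hpe0 (ne_of_gt (hlG.2 e he hl))
        rw [hq] at hql; simp only [this, if_false] at hql
        exact lt_irrefl 0 hql
      · intro hpe
        obtain ⟨l, hl, hlg⟩ := key e he hpe
        refine ⟨l, hl, ?_⟩
        have hlG : l ∈ G := by
          rw [hG, Finset.mem_filter]; exact ⟨Finset.mem_univ l, hlg⟩
        rw [hq]; simp only [hlG, if_true]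
        positivity
  · rintro ⟨n, hn, es, hesE, hinter, k, hpk, hone⟩ ⟨q, hq0, hq1, hiff⟩
    have hk : 0 < setSum q (es k) := (hiff _ (hesE k)).mpr hpk
    obtain ⟨l, hl, hql⟩ := (setSum_pos_iff q hq0 _).mp hk
    have hmem : ∀ i, l ∈ es i := by
      intro i
      by_cases hik : i = k
      · exact hik ▸ hl
      · by_contra hli
        have hci : p (es i)ᶜ = 0 := by rw [hpc _ (hesE i), hone i hik]; ring
        have : ¬ 0 < setSum q (es i)ᶜ := by
          rw [hiff _ (hcompl _ (hesE i)), hci]; exact lt_irrefl 0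
        rw [setSum_pos_iff q hq0] at this
        push_neg at this
        exact absurd (le_antisymm (this l hli) (hq0 l)) (ne_of_gt hql)
    have : l ∈ (⋂ i, es i) := Set.mem_iInter.mpr hmem
    rw [hinter] at this
    exact this
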